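/- Let f : A^V → A^V be a coding function and S a feedback vertex set of G(f). Then the number of fixed points of f is at most |A|^{|S|}. -/
import Mathlib


/-- Arc `(u,i)` of the interaction graph of a coding function `f`. -/
def arcCF {V A : Type*} [DecidableEq V] (f : (V → A) → V → A) (u i : V) : Prop :=
  ∃ (x : V → A) (a : A), f (Function.update x u a) i ≠ f x i

/-- `I` is an acyclic set of `G`. -/
def AcyclicIn {V : Type*} (G : V → V → Prop) (I : Set V) : Prop :=
  ∀ a ∈ I, ¬ ∃ l : List V, (∀ i ∈ l, i ∈ I) ∧ List.Chain G a (l ++ [a])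

/-- Aracena's bound: if `S` is a feedback vertex set of `G(f)` (its complement is an
acyclic set), then `f` has at most `|A|^{|S|}` fixed points. -/
theorem stmt11 {V A : Type*} [Fintype V] [DecidableEq V] [Fintype A]
    (f : (V → A) → V → A) (S : Finset V)
    (hS : AcyclicIn (arcCF f) ((S : Set V))ᶜ) :
    Set.ncard {x : V → A | f x = x} ≤ Fintype.card A ^ S.card := by
  classical
  -- Key hybridization lemma
  have key : ∀ (s : Finset V) (x y : V → A) (v : V), (∀ u, u ∉ s → x u = y u) →
      f x v ≠ f y v → ∃ u, x u ≠ y u ∧ arcCF f u v := by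
    intro s
    induction s using Finset.induction_on with
    | empty =>
      intro x y v h hne
      exact absurd (congrFun (congrArg f (funext fun u => h u (by simp))) v) hne
    | @insert a s' ha ih =>
      intro x y v h hne
      set y' : V → A := Function.update y a (x a) with hy'
      have hagree : ∀ u, u ∉ s' → x u = y' u := by
        intro u hu
        by_cases hua : u = a
        · subst hua; simp [hy']
        · rw [hy', Function.update_of_ne hua]
          exact h u (by simp [hua, hu])
      by_cases hxy' : f x v = f y' v
      · have hne' : f y' v ≠ f y v := by rw [← hxy']; exact hne
        have hxa : x a ≠ y a := by
          intro hxa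
          apply hne'
          have : y' = y := by
            funext u
            by_cases hua : u = a
            · subst hua; simp [hy', hxa]
            · simp [hy', Function.update_of_ne hua]
          rw [this]
        exact ⟨a, hxa, ⟨y, x a, hne'⟩⟩
      · obtain ⟨u, hu1, hu2⟩ := ih x y' v hagree hxy'
        have hua : u ≠ a := by
          intro h'; subst h'; simp [hy'] at hu1
        refine ⟨u, ?_, hu2⟩
        rwa [hy', Function.update_of_ne hua] at hu1
  -- Fixed points agreeing on S are equal
  have inj : ∀ x ∈ {x : V → A | f x = x}, ∀ y ∈ {x : V → A | f x = x},
      (∀ v ∈ S, x v = y v) → x = y := by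
    intro x hx y hy hSxy
    by_contra hxy
    have hex : ∃ v, x v ≠ y v := by
      by_contra h; push_neg at h; exact hxy (funext h)
    -- every v with x v ≠ y v has a predecessor with x u ≠ y u
    have step : ∀ v, x v ≠ y v → ∃ u, x u ≠ y u ∧ arcCF f u v := by
      intro v hv
      have : f x v ≠ f y v := by rw [hx, hy]; exact hv
      exact key Finset.univ x y v (fun u hu => absurd (Finset.mem_univ u) hu) this
    choose g hg1 hg2 using step
    obtain ⟨v0, hv0⟩ := hex
    let seq' : ℕ → {v : V // x v ≠ y v} := fun n =>
      Nat.rec ⟨v0, hv0⟩ (fun _ p => ⟨g p.1 p.2, hg1 p.1 p.2⟩) n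
    let seq : ℕ → V := fun n => (seq' n).1
    have hseqD : ∀ n, x (seq n) ≠ y (seq n) := fun n => (seq' n).2
    have hseqG : ∀ n, arcCF f (seq (n+1)) (seq n) := fun n => hg2 (seq' n).1 (seq' n).2
    -- chains
    have chain_aux : ∀ (n i : ℕ), ∃ l : List V, (∀ v ∈ l, x v ≠ y v) ∧
        List.Chain (arcCF f) (seq (i + n + 1)) (l ++ [seq i]) := by
      intro n
      induction n with
      | zero =>
        intro i
        exact ⟨[], by simp, List.Chain.cons (hseqG i) (List.Chain.nil)⟩
      | succ n ih =>
        intro i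
        obtain ⟨l, hl1, hl2⟩ := ih i
        refine ⟨seq (i + n + 1) :: l, ?_, ?_⟩
        · intro v hv
          rcases List.mem_cons.mp hv with h | h
          · rw [h]; exact hseqD (i + n + 1)
          · exact hl1 v h
        · have : i + (n + 1) + 1 = (i + n + 1) + 1 := by ring
          rw [this]
          exact List.Chain.cons (hseqG (i + n + 1)) hl2
    -- pigeonhole
    obtain ⟨i, j, hij, hseqeq⟩ := Finite.exists_ne_map_eq_of_infinite seq
    wlog hlt : i < j generalizing i j
    · exact this j i hij.symm hseqeq.symm (by omega)
    have hSc : ∀ v, x v ≠ y v → v ∈ ((S : Set V))ᶜ := by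
      intro v hv hvS
      exact hv (hSxy v hvS)
    obtain ⟨l, hl1, hl2⟩ := chain_aux (j - i - 1) i
    have hji : i + (j - i - 1) + 1 = j := by omega
    rw [hji] at hl2
    refine hS (seq j) (hSc _ (hseqD j)) ⟨l, ?_, ?_⟩
    · intro v hv
      exact hSc v (hl1 v hv)
    · have heq : l ++ [seq j] = l ++ [seq i] := by rw [hseqeq]
      rw [heq]
      exact hl2
  -- conclude by counting
  have hcard : Nat.card {x : V → A | f x = x} ≤ Fintype.card A ^ S.card := by
    have hinj : Function.Injective
        (fun (x : {x : V → A | f x = x}) => (fun v : S => (x : V → A) v)) := by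
      intro x y hxy
      ext1
      exact inj x x.2 y y.2 (fun v hv => congrFun hxy ⟨v, hv⟩)
    calc Nat.card {x : V → A | f x = x} ≤ Nat.card (S → A) :=
          Nat.card_le_card_of_injective _ hinj
      _ = Fintype.card A ^ S.card := by
          rw [Nat.card_eq_fintype_card, Fintype.card_fun, Fintype.card_coe]
  rw [← Nat.card_coe_set_eq]
  exact hcard
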